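/- Let |+⟩ := (|0⟩+|1⟩)/√2 in ℂ², and for ω ∈ ℝ let |χ_ω⟩ := (|0⟩ + e^{iω}|1⟩)/√2 ⊗ |1⟩ in ℂ²⊗ℂ². Define the 4×4 density matrices ρ₀ := (1/2)(|0⟩⟨0| + |1⟩⟨1|) ⊗ |+⟩⟨+| and ρ₁ := (1/2)(|+⟩⟨+| ⊗ |0⟩⟨0| + |χ_ω⟩⟨χ_ω|). Then the eigenvalues of ρ(ω) := (1/2)(ρ₀ + ρ₁) are (1/4)(1 + cos(ω/4)), (1/4)(1 − cos(ω/4)), (1/4)(1 + sin(ω/4)), and (1/4)(1 − sin(ω/4)). -/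

import Mathlib

open scoped BigOperators Kronecker
open Matrix

noncomputable section

/-- Rank-one outer product `|φ⟩⟨φ|`. -/
def outer {n : Type*} (φ : n → ℂ) : Matrix n n ℂ :=
  fun i j => φ i * (starRingEnd ℂ) (φ j)

/-- `|0⟩ ∈ ℂ²`. -/
def ket0 : Fin 2 → ℂ := fun i => if i = 0 then 1 else 0

/-- `|1⟩ ∈ ℂ²`. -/
def ket1 : Fin 2 → ℂ := fun i => if i = 1 then 1 else 0

/-- `|+⟩ = (|0⟩ + |1⟩)/√2 ∈ ℂ²`. -/
def ketPlus : Fin 2 → ℂ := fun _ => 1 / (Real.sqrt 2 : ℂ)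

/-- `|χ_ω⟩ = ((|0⟩ + e^{iω}|1⟩)/√2) ⊗ |1⟩ ∈ ℂ² ⊗ ℂ²`. -/
def ketChi (ω : ℝ) : Fin 2 × Fin 2 → ℂ := fun p =>
  ((if p.1 = 0 then 1 else Complex.exp ((ω : ℂ) * Complex.I)) / (Real.sqrt 2 : ℂ)) *
    (if p.2 = 1 then 1 else 0)

/-- `ρ₀ = (1/2)(|0⟩⟨0| + |1⟩⟨1|) ⊗ |+⟩⟨+|`. -/
def rho0 : Matrix (Fin 2 × Fin 2) (Fin 2 × Fin 2) ℂ :=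
  (1 / 2 : ℂ) • ((outer ket0 + outer ket1) ⊗ₖ outer ketPlus)

/-- `ρ₁ = (1/2)(|+⟩⟨+| ⊗ |0⟩⟨0| + |χ_ω⟩⟨χ_ω|)`. -/
def rho1 (ω : ℝ) : Matrix (Fin 2 × Fin 2) (Fin 2 × Fin 2) ℂ :=
  (1 / 2 : ℂ) • (outer ketPlus ⊗ₖ outer ket0 + outer (ketChi ω))

open Polynomial in
lemma charpoly_conj_unit {n : Type*} [Fintype n] [DecidableEq n]
    (U D : Matrix n n ℂ) (h1 : U * star U = 1) :
    (U * D * star U).charpoly = D.charpoly := by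
  have hscal : (Matrix.scalar n (X : ℂ[X])) = (X : ℂ[X]) • (1 : Matrix n n ℂ[X]) := by
    ext i j
    by_cases h : i = j <;>
      simp [Matrix.scalar_apply, Matrix.diagonal, Matrix.one_apply, h, Matrix.smul_apply]
  have hmapmul : ∀ A B : Matrix n n ℂ, (A * B).map (C : ℂ →+* ℂ[X]) = A.map C * B.map C :=
    fun A B => Matrix.map_mul
  have hUV : U.map (C : ℂ →+* ℂ[X]) * (star U).map C = 1 := by
    rw [← hmapmul, h1]
    exact Matrix.map_one _ (map_zero _) (map_one _)
  have hm : U.map (C : ℂ →+* ℂ[X]) * charmatrix D * (star U).map C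
      = charmatrix (U * D * star U) := by
    unfold charmatrix
    simp only [RingHom.mapMatrix_apply]
    rw [Matrix.mul_sub, Matrix.sub_mul]
    simp only [hscal]
    rw [mul_smul_comm, Matrix.mul_one, smul_mul_assoc, hUV, hmapmul (U * D), hmapmul U,
      Matrix.mul_assoc]
  unfold Matrix.charpoly
  rw [← hm, Matrix.det_mul, Matrix.det_mul]
  have hd : (U.map (C : ℂ →+* ℂ[X])).det * ((star U).map C).det = 1 := by
    rw [← Matrix.det_mul, hUV, Matrix.det_one]
  linear_combination (charmatrix D).det * hd

open Polynomial in
lemma herm_roots {n : Type*} [Fintype n] [DecidableEq n] {M : Matrix n n ℂ}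
    (h : M.IsHermitian) :
    M.charpoly.roots = Finset.univ.val.map (fun i => ((h.eigenvalues i : ℝ) : ℂ)) := by
  have hsp := h.spectral_theorem
  have h1 : (h.eigenvectorUnitary : Matrix n n ℂ) * star (h.eigenvectorUnitary : Matrix n n ℂ)
      = 1 := Matrix.mem_unitaryGroup_iff.mp h.eigenvectorUnitary.2
  have hc : M.charpoly
      = (Matrix.diagonal (RCLike.ofReal ∘ h.eigenvalues)).charpoly := by
    conv_lhs => rw [hsp]
    exact charpoly_conj_unit _ _ h1
  have hdiag : (Matrix.diagonal (RCLike.ofReal ∘ h.eigenvalues) : Matrix n n ℂ).charpoly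
      = ((Finset.univ.val.map fun i => ((h.eigenvalues i : ℝ) : ℂ)).map
          (fun a => X - C a)).prod := by
    unfold Matrix.charpoly
    have : charmatrix (Matrix.diagonal (RCLike.ofReal ∘ h.eigenvalues) : Matrix n n ℂ)
        = Matrix.diagonal (fun i => X - C ((h.eigenvalues i : ℝ) : ℂ)) := by
      ext i j
      by_cases hij : i = j
      · subst hij; simp [charmatrix_apply_eq, Matrix.diagonal_apply_eq]
      · simp [charmatrix_apply_ne _ _ _ hij, Matrix.diagonal_apply_ne _ hij]
    rw [this, Matrix.det_diagonal, Multiset.map_map]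
    exact Finset.prod_eq_multiset_prod _ _
  rw [hc, hdiag, Polynomial.roots_multiset_prod_X_sub_C]

/-- The index equivalence `(Fin 2 × Fin 2) ≃ Fin 4`. -/
def pe : Fin 2 × Fin 2 ≃ Fin 4 where
  toFun := fun p => ![![0,1],![2,3]] p.1 p.2
  invFun := ![(0,0),(0,1),(1,0),(1,1)]
  left_inv := by decide
  right_inv := by decide

set_option maxHeartbeats 2000000 in
set_option maxRecDepth 4000 in
/-- the eigenvalues of `ρ(ω) = (1/2)(ρ₀ + ρ₁)` are
`(1 ± cos(ω/4))/4` and `(1 ± sin(ω/4))/4`. -/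
theorem rho_omega_eigenvalues (ω : ℝ) :
    ∃ h : ((1 / 2 : ℂ) • (rho0 + rho1 ω)).IsHermitian,
      Finset.univ.val.map h.eigenvalues =
        ({(1 + Real.cos (ω / 4)) / 4, (1 - Real.cos (ω / 4)) / 4,
          (1 + Real.sin (ω / 4)) / 4, (1 - Real.sin (ω / 4)) / 4} : Multiset ℝ) := by
  set E := Complex.exp ((ω : ℂ) * Complex.I) with hEdef
  set N : Matrix (Fin 4) (Fin 4) ℂ :=
    !![1/4, 1/8, 1/8, 0;
       1/8, 1/4, 0, (starRingEnd ℂ) E / 8;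
       1/8, 0, 1/4, 1/8;
       0, E/8, 1/8, 1/4] with hN
  set M : Matrix (Fin 2 × Fin 2) (Fin 2 × Fin 2) ℂ := (1 / 2 : ℂ) • (rho0 + rho1 ω) with hM
  have hs2 : ((Real.sqrt 2 : ℝ) : ℂ) * ((Real.sqrt 2 : ℝ) : ℂ) = 2 := by
    norm_cast
    exact Real.mul_self_sqrt (by norm_num)
  have hpow : ((Real.sqrt 2 : ℝ) : ℂ) ^ 2 = 2 := by rw [sq, hs2]
  have hinv : (((Real.sqrt 2 : ℝ) : ℂ))⁻¹ * (((Real.sqrt 2 : ℝ) : ℂ))⁻¹ = 1 / 2 := by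
    rw [← mul_inv, hs2]; norm_num
  have hx1 : ∀ x : ℂ, (((Real.sqrt 2 : ℝ) : ℂ))⁻¹ * (x / ((Real.sqrt 2 : ℝ) : ℂ)) = x / 2 := by
    intro x
    rw [div_eq_mul_inv, mul_comm x, ← mul_assoc, hinv]; ring
  have hx2 : ∀ x : ℂ, x / ((Real.sqrt 2 : ℝ) : ℂ) * (((Real.sqrt 2 : ℝ) : ℂ))⁻¹ = x / 2 := by
    intro x
    rw [div_eq_mul_inv, mul_assoc, hinv]; ring
  have hstar : (starRingEnd ℂ) (Complex.exp ((ω : ℂ) * Complex.I))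
      = Complex.exp (-((ω : ℂ) * Complex.I)) := by
    rw [← Complex.exp_conj]
    congr 1
    rw [_root_.map_mul, Complex.conj_ofReal, Complex.conj_I]; ring
  have hEE : Complex.exp ((ω : ℂ) * Complex.I)
      * (starRingEnd ℂ) (Complex.exp ((ω : ℂ) * Complex.I)) = 1 := by
    rw [hstar, ← Complex.exp_add]; simp
  have hre : Matrix.reindex pe pe M = N := by
    ext i j
    fin_cases i <;> fin_cases j <;>
      · simp [hM, hN, pe, rho0, rho1, outer, ket0, ket1, ketPlus, ketChi,
          Matrix.smul_apply, Matrix.add_apply, Matrix.kroneckerMap_apply,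
          map_div₀, Complex.conj_ofReal, div_mul_div_comm, hs2, inv_pow, hpow, hinv, hx1, hx2, hEE, show E * (starRingEnd ℂ) E = 1 from hEE, ← hEdef]
        try norm_num
        try ring
  have hNh : N.IsHermitian := by
    rw [Matrix.IsHermitian]
    ext i j
    fin_cases i <;> fin_cases j <;>
      simp [hN, Matrix.conjTranspose_apply, Complex.conj_conj]
  have hMh : M.IsHermitian := by
    have h' := hNh
    rw [← hre, Matrix.reindex_apply] at h'
    exact (Matrix.isHermitian_submatrix_equiv pe.symm).mp h'
  refine ⟨hMh, ?_⟩
  have hcp : M.charpoly = N.charpoly := by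
    rw [← Matrix.charpoly_reindex pe M, hre]
  have hcs : ((Real.cos (ω/4) : ℝ) : ℂ) ^ 2 + ((Real.sin (ω/4) : ℝ) : ℂ) ^ 2 = 1 := by
    norm_cast
    exact Real.cos_sq_add_sin_sq _
  have hr : (2:ℝ) - 2 * Real.cos ω = 16 * (Real.sin (ω/4))^2 * (Real.cos (ω/4))^2 := by
    have h1 : Real.cos ω = Real.cos (ω/2)^2 - Real.sin (ω/2)^2 := by
      rw [show ω = 2*(ω/2) by ring, Real.cos_two_mul']
      ring_nf
    have h2 : Real.sin (ω/2) = 2 * Real.sin (ω/4) * Real.cos (ω/4) := by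
      rw [show ω/2 = 2*(ω/4) by ring, Real.sin_two_mul]
    have h3 : Real.sin (ω/2)^2 + Real.cos (ω/2)^2 = 1 := Real.sin_sq_add_cos_sq _
    linear_combination (-2:ℝ) * h1 - 2 * h3
      + 4 * (Real.sin (ω/2) + 2 * Real.sin (ω/4) * Real.cos (ω/4)) * h2
  have hmulE : E * (starRingEnd ℂ) E = 1 := hEE
  have hprodC : E + (starRingEnd ℂ) E
      = 2 - 16 * ((Real.sin (ω/4) : ℝ) : ℂ)^2 * ((Real.cos (ω/4) : ℝ) : ℂ)^2 := by
    have h2c : Complex.exp ((ω:ℂ) * Complex.I) + Complex.exp (-((ω:ℂ) * Complex.I))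
        = 2 * Complex.cos ω := by
      rw [Complex.two_cos, neg_mul]
    have h4 : Complex.cos (ω:ℂ) = ((Real.cos ω : ℝ) : ℂ) := (Complex.ofReal_cos ω).symm
    have hrC : (2:ℂ) - 2 * ((Real.cos ω : ℝ) : ℂ)
        = 16 * ((Real.sin (ω/4) : ℝ) : ℂ)^2 * ((Real.cos (ω/4) : ℝ) : ℂ)^2 := by
      exact_mod_cast congrArg (fun r : ℝ => (r : ℂ)) hr
    rw [hEdef, hstar]
    rw [h2c, h4]
    linear_combination -hrC
  -- the characteristic polynomial of N
  have hNchar : N.charpoly =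
      ((({(((1 + Real.cos (ω / 4)) / 4 : ℝ) : ℂ), (((1 - Real.cos (ω / 4)) / 4 : ℝ) : ℂ),
          (((1 + Real.sin (ω / 4)) / 4 : ℝ) : ℂ), (((1 - Real.sin (ω / 4)) / 4 : ℝ) : ℂ)} :
          Multiset ℂ)).map (fun a => Polynomial.X - Polynomial.C a)).prod := by
    apply Polynomial.funext
    intro x
    have hdet : Polynomial.eval x N.charpoly
        = ((charmatrix N).map (Polynomial.evalRingHom x)).det :=
      RingHom.map_det (Polynomial.evalRingHom x) (charmatrix N)
    have hmap : (charmatrix N).map (Polynomial.evalRingHom x) =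
        !![x - 1/4, -(1/8), -(1/8), 0;
           -(1/8), x - 1/4, 0, -((starRingEnd ℂ) E / 8);
           -(1/8), 0, x - 1/4, -(1/8);
           0, -(E/8), -(1/8), x - 1/4] := by
      ext i j
      fin_cases i <;> fin_cases j <;>
        simp [charmatrix_apply, hN, Matrix.diagonal_apply]
    rw [hdet, hmap]
    simp only [Multiset.insert_eq_cons, Multiset.map_cons, Multiset.map_singleton,
      Multiset.prod_cons, Multiset.prod_singleton, Polynomial.eval_mul, Polynomial.eval_sub,
      Polynomial.eval_X, Polynomial.eval_C]
    simp [Matrix.det_succ_row_zero, Fin.sum_univ_succ, Fin.succAbove,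
      -Complex.ofReal_cos, -Complex.ofReal_sin]
    linear_combination ((1:ℂ)/4096 - (x - 1/4)^2/64) * hmulE + ((x - 1/4)^2/16) * hcs
      - (1/4096) * hprodC
  have h5 := herm_roots hMh
  have h6 : Finset.univ.val.map (fun i => ((hMh.eigenvalues i : ℝ) : ℂ))
      = ({(((1 + Real.cos (ω / 4)) / 4 : ℝ) : ℂ), (((1 - Real.cos (ω / 4)) / 4 : ℝ) : ℂ),
          (((1 + Real.sin (ω / 4)) / 4 : ℝ) : ℂ), (((1 - Real.sin (ω / 4)) / 4 : ℝ) : ℂ)} :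
          Multiset ℂ) := by
    rw [← h5, hcp, hNchar, Polynomial.roots_multiset_prod_X_sub_C]
  apply Multiset.map_injective (f := ((↑) : ℝ → ℂ)) Complex.ofReal_injective
  rw [Multiset.map_map]
  simpa using h6
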